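/- If G contains a clique {v_{γ_1},…,v_{γ_k}} of size k (k distinct, pairwise adjacent vertices), then the 2k directed paths Canonical_vertex(γ_i; a_i⇝b_i) for i ∈ [k] and Canonical_vertex(γ_j; c_j⇝d_j) for j ∈ [k] are pairwise vertex-disjoint and each is a shortest path in D_vertex between its terminal pair; in particular all 2k terminal pairs of (D_vertex, T) can be simultaneously satisfied by pairwise vertex-disjoint shortest paths. -/

import Mathlib

/-- A directed path (self-avoiding walk) from `s` to `t` in the digraph with
edge relation `E`, given as the list of its vertices in order. -/
structure IsPathList {V : Type*} (E : V → V → Prop) (s t : V) (p : List V) : Prop where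
  chain : p.Chain' E
  nodup : p.Nodup
  head : p.head? = some s
  last : p.getLast? = some t

/-- A shortest directed `s⇝t` path, where the length of a path is its number of vertices. -/
def IsShortestDirPath {V : Type*} (E : V → V → Prop) (s t : V) (p : List V) : Prop :=
  IsPathList E s t p ∧ ∀ q : List V, IsPathList E s t q → p.length ≤ q.length

/-- Symmetrization of a relation: the adjacency of the undirected graph obtained by
forgetting the orientation of the edges. -/
def UAdj {V : Type*} (E : V → V → Prop) (x y : V) : Prop := E x y ∨ E y x

/-- The cost of a path: the sum of the costs of its vertices. -/
def pathCost {V : Type*} (cost : V → ℕ) (p : List V) : ℕ := (p.map cost).sum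

/-- A shortest (minimum-cost) `s`–`t` path in the undirected graph obtained from `E`. -/
def IsShortestCostPath {V : Type*} (E : V → V → Prop) (cost : V → ℕ) (s t : V)
    (p : List V) : Prop :=
  IsPathList (UAdj E) s t p ∧
    ∀ q : List V, IsPathList (UAdj E) s t q → pathCost cost p ≤ pathCost cost q

/-- The (directed) edges traversed by a path, as ordered pairs of consecutive vertices. -/
def dirEdges {V : Type*} (p : List V) : List (V × V) := p.zip p.tail

/-- Two directed paths are edge-disjoint. -/
def EdgeDisj {V : Type*} (p q : List V) : Prop := ∀ e ∈ dirEdges p, e ∉ dirEdges q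

/-- The (undirected) edges traversed by a path, as unordered pairs. -/
def uEdges {V : Type*} (p : List V) : List (Sym2 V) := (dirEdges p).map fun e => s(e.1, e.2)

/-- Two undirected paths are edge-disjoint. -/
def UEdgeDisj {V : Type*} (p q : List V) : Prop := ∀ e ∈ uEdges p, e ∉ uEdges q

/-- Two paths are vertex-disjoint. -/
def VertDisj {V : Type*} (p q : List V) : Prop := ∀ v ∈ p, v ∉ q

/-- `(q,ℓ) ∈ S_{i,j}`: for `i = j` this means `q = ℓ` and for `i ≠ j` it means that
`v_q v_ℓ` is an edge of `G`. -/
def Split {k N : ℕ} (G : SimpleGraph (Fin N)) (i j : Fin k) (q ℓ : Fin N) : Prop :=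
  (i = j ∧ q = ℓ) ∨ (i ≠ j ∧ G.Adj q ℓ)

instance {k N : ℕ} (G : SimpleGraph (Fin N)) [DecidableRel G.Adj]
    (i j : Fin k) (q ℓ : Fin N) : Decidable (Split G i j q ℓ) := by
  unfold Split; infer_instance

/-- The vertices of the graph `D_vertex` (also the vertex set of `U_vertex`): each grid
vertex `w_{i,j}^{q,ℓ}` of `D_int` gives rise to `gridH i j q ℓ` (the vertex `w_Hor`) and
`gridV i j q ℓ` (the vertex `w_Ver`, which carries edges only when `w` is vertex-split;
when `w` is not split the single vertex `w_Hor = w_Ver` is represented by `gridH` and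
`gridV` is isolated), plus the terminal vertices. -/
inductive DVertV (k N : ℕ) where
  | gridH (i j : Fin k) (q ℓ : Fin N)
  | gridV (i j : Fin k) (q ℓ : Fin N)
  | a (i : Fin k)
  | b (i : Fin k)
  | c (j : Fin k)
  | d (j : Fin k)
  deriving DecidableEq

/-- The vertex of `D_vertex` carrying the vertical (south/north) edges at the former
grid vertex `w_{i,j}^{q,ℓ}`: `w_Ver` if it is vertex-split, and `w_Hor = w_Ver`
otherwise. -/
def vNode {k N : ℕ} (G : SimpleGraph (Fin N)) [DecidableRel G.Adj]
    (i j : Fin k) (q ℓ : Fin N) : DVertV k N :=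
  if Split G i j q ℓ then DVertV.gridV i j q ℓ else DVertV.gridH i j q ℓ

/-- The directed edges of `D_vertex`: horizontal (west/east) edges attach to `w_Hor`
and vertical (south/north) edges attach to `w_Ver` (with `w_Hor = w_Ver` at non-split
vertices); terminal edges play the role of the corresponding boundary edges. -/
inductive DVertE (k N : ℕ) (G : SimpleGraph (Fin N)) [DecidableRel G.Adj] :
    DVertV k N → DVertV k N → Prop where
  /-- former edge `w_{i,j}^{q,ℓ} → w_{i,j}^{q,ℓ+1}` (vertical) -/
  | up (i j : Fin k) (q ℓ ℓ' : Fin N) (h : (ℓ' : ℕ) = (ℓ : ℕ) + 1) :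
      DVertE k N G (vNode G i j q ℓ) (vNode G i j q ℓ')
  /-- former edge `w_{i,j}^{q,ℓ} → w_{i,j}^{q+1,ℓ}` (horizontal) -/
  | right (i j : Fin k) (q q' ℓ : Fin N) (h : (q' : ℕ) = (q : ℕ) + 1) :
      DVertE k N G (.gridH i j q ℓ) (.gridH i j q' ℓ)
  /-- former edge `w_{i,j}^{N,ℓ} → w_{i+1,j}^{1,ℓ}` (horizontal) -/
  | hmatch (i i' j : Fin k) (q q' ℓ : Fin N)
      (hi : (i' : ℕ) = (i : ℕ) + 1) (hq : (q : ℕ) + 1 = N) (hq' : (q' : ℕ) = 0) :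
      DVertE k N G (.gridH i j q ℓ) (.gridH i' j q' ℓ)
  /-- former edge `w_{i,j}^{ℓ,N} → w_{i,j+1}^{ℓ,1}` (vertical) -/
  | vmatch (i j j' : Fin k) (q ℓ ℓ' : Fin N)
      (hj : (j' : ℕ) = (j : ℕ) + 1) (hl : (ℓ : ℕ) + 1 = N) (hl' : (ℓ' : ℕ) = 0) :
      DVertE k N G (vNode G i j q ℓ) (vNode G i j' q ℓ')
  /-- former edge `a_i → w_{i,1}^{q,1}` (vertical: `a_i` plays the south neighbour) -/
  | srcA (i j : Fin k) (q ℓ : Fin N) (hj : (j : ℕ) = 0) (hl : (ℓ : ℕ) = 0) :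
      DVertE k N G (.a i) (vNode G i j q ℓ)
  /-- former edge `w_{i,k}^{q,N} → b_i` (vertical) -/
  | snkB (i j : Fin k) (q ℓ : Fin N) (hj : (j : ℕ) + 1 = k) (hl : (ℓ : ℕ) + 1 = N) :
      DVertE k N G (vNode G i j q ℓ) (.b i)
  /-- former edge `c_j → w_{1,j}^{1,ℓ}` (horizontal: `c_j` plays the west neighbour) -/
  | srcC (i j : Fin k) (q ℓ : Fin N) (hi : (i : ℕ) = 0) (hq : (q : ℕ) = 0) :
      DVertE k N G (.c j) (.gridH i j q ℓ)
  /-- former edge `w_{k,j}^{N,ℓ} → d_j` (horizontal) -/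
  | snkD (i j : Fin k) (q ℓ : Fin N) (hi : (i : ℕ) + 1 = k) (hq : (q : ℕ) + 1 = N) :
      DVertE k N G (.gridH i j q ℓ) (.d j)

/-- `Canonical_vertex(r; c_j⇝d_j)`: obtained from `Canonical(r; c_j⇝d_j)` by routing
through `w_Hor` at every vertex-split grid vertex (and through `w_Hor = w_Ver` at
not-split vertices). -/
def canonVertH (k N : ℕ) (j : Fin k) (r : Fin N) : List (DVertV k N) :=
  DVertV.c j ::
    (((List.finRange k).flatMap fun i =>
        (List.finRange N).map fun q => DVertV.gridH i j q r) ++ [DVertV.d j])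

/-- `Canonical_vertex(r; a_i⇝b_i)`: obtained from `Canonical(r; a_i⇝b_i)` by routing
through `w_Ver` at every vertex-split grid vertex (and through `w_Hor = w_Ver` at
not-split vertices). -/
def canonVertV {k N : ℕ} (G : SimpleGraph (Fin N)) [DecidableRel G.Adj]
    (i : Fin k) (r : Fin N) : List (DVertV k N) :=
  DVertV.a i ::
    (((List.finRange k).flatMap fun j =>
        (List.finRange N).map fun ℓ => vNode G i j r ℓ) ++ [DVertV.b i])

namespace DVertAux
variable {α V : Type*} {R : V → V → Prop} {N k : ℕ}

section rows
lemma finRange_chain' {S : Fin N → Fin N → Prop}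
    (h : ∀ q q' : Fin N, (q' : ℕ) = (q : ℕ) + 1 → S q q') :
    (List.finRange N).Chain' S := by
  rw [show List.Chain' S (List.finRange N) ↔ _ from List.isChain_iff_getElem]
  intro n hn
  simp only [List.length_finRange] at hn
  have := h ⟨n, by omega⟩ ⟨n + 1, by omega⟩ rfl
  simpa using this

lemma row_chain' {g : Fin N → V}
    (h : ∀ q q' : Fin N, (q' : ℕ) = (q : ℕ) + 1 → R (g q) (g q')) :
    ((List.finRange N).map g).Chain' R := by
  rw [show List.Chain' R _ ↔ _ from List.isChain_map g]; exact finRange_chain' h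

lemma row_ne_nil (hN : 0 < N) (g : Fin N → V) : (List.finRange N).map g ≠ [] := by
  intro h
  have hl : ((List.finRange N).map g).length = N := by simp
  rw [h] at hl; simp at hl; omega

lemma row_head? (hN : 0 < N) (g : Fin N → V) :
    ((List.finRange N).map g).head? = some (g ⟨0, hN⟩) := by
  rw [List.head?_map, List.head?_eq_getElem?, List.getElem?_eq_getElem (by simpa using hN)]
  simp

lemma row_getLast? (hN : 0 < N) (g : Fin N → V) :
    ((List.finRange N).map g).getLast? = some (g ⟨N - 1, by omega⟩) := by
  rw [List.getLast?_map, List.getLast?_eq_getElem?]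
  rw [List.getElem?_eq_getElem (by simp; omega)]
  simp

lemma row_nodup {g : Fin N → V} (hg : Function.Injective g) :
    ((List.finRange N).map g).Nodup := (List.nodup_finRange N).map hg

lemma chain'_flatMapAux {f : α → List V} :
    ∀ l : List α, (∀ a ∈ l, f a ≠ []) → (∀ a ∈ l, (f a).Chain' R) →
    l.Chain' (fun a b => ∀ x ∈ (f a).getLast?, ∀ y ∈ (f b).head?, R x y) →
    (l.flatMap f).Chain' R
  | [], _, _, _ => List.isChain_nil
  | [a], _, hc, _ => by simpa using hc a (by simp)
  | a :: b :: l, hne, hc, hlink => by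
    rw [List.flatMap_cons]
    refine List.IsChain.append (hc a (by simp))
      (chain'_flatMapAux (b :: l) (fun x hx => hne x (by simp [hx]))
        (fun x hx => hc x (by simp [hx]))
        ((List.isChain_cons_cons.1 hlink).2)) ?_
    intro x hx y hy
    rw [List.flatMap_cons, List.head?_append_of_ne_nil _ (hne b (by simp))] at hy
    exact (List.isChain_cons_cons.1 hlink).1 x hx y hy

lemma head?_flatMap {f : α → List V} :
    ∀ (l : List α) (hl : l ≠ []), f (l.head hl) ≠ [] →
      (l.flatMap f).head? = (f (l.head hl)).head?
  | a :: l, _, h => by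
    simp only [List.head_cons] at h ⊢
    rw [List.flatMap_cons, List.head?_append_of_ne_nil _ h]

lemma getLast?_flatMap {f : α → List V} (l : List α) (hl : l ≠ [])
    (h : f (l.getLast hl) ≠ []) :
    (l.flatMap f).getLast? = (f (l.getLast hl)).getLast? := by
  conv_lhs => rw [← List.dropLast_append_getLast hl]
  rw [List.flatMap_append, List.getLast?_append_of_ne_nil _ (by simpa using h)]
  simp

lemma head_finRange (hk : 0 < k) (h : List.finRange k ≠ []) :
    (List.finRange k).head h = ⟨0, hk⟩ := by
  rw [List.head_eq_getElem]; simp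

lemma getLast_finRange (hk : 0 < k) (h : List.finRange k ≠ []) :
    (List.finRange k).getLast h = ⟨k - 1, by omega⟩ := by
  rw [List.getLast_eq_getElem]; simp

lemma finRange_ne_nil (hk : 0 < k) : List.finRange k ≠ [] := by
  intro h
  have := List.length_finRange (n := k)
  rw [h] at this; simp at this; omega
end rows

section blocks

def blocksL (g : Fin k → Fin N → V) : List V :=
  (List.finRange k).flatMap fun a => (List.finRange N).map (g a)

lemma blocksL_mem {g : Fin k → Fin N → V} {v : V} :
    v ∈ blocksL g ↔ ∃ a q, v = g a q := by
  simp [blocksL, eq_comm]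

lemma blocksL_ne_nil (hk : 0 < k) (hN : 0 < N) (g : Fin k → Fin N → V) :
    blocksL g ≠ [] := by
  intro h
  have h0 : g ⟨0, hk⟩ ⟨0, hN⟩ ∈ blocksL g := blocksL_mem.2 ⟨_, _, rfl⟩
  rw [h] at h0; simp at h0

lemma blocksL_length (g : Fin k → Fin N → V) : (blocksL g).length = k * N := by
  simp only [blocksL, List.length_flatMap]
  rw [show (fun a => (List.map (g a) (List.finRange N)).length) = fun _ : Fin k => N by
    funext a; simp]
  simp [List.map_const', List.sum_replicate, smul_eq_mul, mul_comm]

lemma blocksL_head? (hk : 0 < k) (hN : 0 < N) (g : Fin k → Fin N → V) :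
    (blocksL g).head? = some (g ⟨0, hk⟩ ⟨0, hN⟩) := by
  rw [blocksL, head?_flatMap _ (finRange_ne_nil hk) (by rw [head_finRange hk]; exact row_ne_nil hN _)]
  rw [head_finRange hk, row_head? hN]

lemma blocksL_getLast? (hk : 0 < k) (hN : 0 < N) (g : Fin k → Fin N → V) :
    (blocksL g).getLast? = some (g ⟨k - 1, by omega⟩ ⟨N - 1, by omega⟩) := by
  rw [blocksL, getLast?_flatMap _ (finRange_ne_nil hk) (by rw [getLast_finRange hk]; exact row_ne_nil hN _)]
  rw [getLast_finRange hk, row_getLast? hN]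

lemma blocksL_chain' (hN : 0 < N) {g : Fin k → Fin N → V}
    (hstep : ∀ (a : Fin k) (q q' : Fin N), (q' : ℕ) = (q : ℕ) + 1 → R (g a q) (g a q'))
    (hjump : ∀ a a' : Fin k, (a' : ℕ) = (a : ℕ) + 1 →
      R (g a ⟨N - 1, by omega⟩) (g a' ⟨0, hN⟩)) :
    (blocksL g).Chain' R := by
  apply chain'_flatMapAux
  · exact fun a _ => row_ne_nil hN _
  · exact fun a _ => row_chain' (hstep a)
  · apply finRange_chain'
    intro a a' ha x hx y hy
    rw [row_getLast? hN] at hx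
    rw [row_head? hN] at hy
    simp only [Option.mem_def, Option.some.injEq] at hx hy
    subst hx; subst hy
    exact hjump a a' ha

lemma blocksL_nodup {g : Fin k → Fin N → V}
    (hg : ∀ {a q a' q'}, g a q = g a' q' → a = a' ∧ q = q') :
    (blocksL g).Nodup := by
  rw [blocksL, List.nodup_flatMap]
  constructor
  · exact fun a _ => row_nodup fun q q' h => (hg h).2
  · refine (List.nodup_finRange k).imp ?_
    intro a b hab x hx hx'
    simp only [List.mem_map] at hx hx'
    obtain ⟨q, -, rfl⟩ := hx
    obtain ⟨q', -, h⟩ := hx'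
    exact hab (hg h.symm).1

end blocks

section canon

def canonL (s t : V) (g : Fin k → Fin N → V) : List V := s :: (blocksL g ++ [t])

lemma canonL_mem {s t : V} {g : Fin k → Fin N → V} {v : V} :
    v ∈ canonL s t g ↔ v = s ∨ v = t ∨ ∃ a q, v = g a q := by
  constructor
  · intro h
    rcases List.mem_cons.1 h with rfl | h
    · exact Or.inl rfl
    rcases List.mem_append.1 h with h | h
    · exact Or.inr (Or.inr (blocksL_mem.1 h))
    · simp only [List.mem_singleton] at h; exact Or.inr (Or.inl h)
  · rintro (rfl | rfl | ⟨a, q, rfl⟩)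
    · exact List.mem_cons_self
    · exact List.mem_cons_of_mem _ (List.mem_append.2 (Or.inr (by simp)))
    · exact List.mem_cons_of_mem _ (List.mem_append.2 (Or.inl (blocksL_mem.2 ⟨a, q, rfl⟩)))

lemma canonL_length (s t : V) (g : Fin k → Fin N → V) :
    (canonL s t g).length = k * N + 2 := by
  simp [canonL, blocksL_length]

lemma canonL_head? (s t : V) (g : Fin k → Fin N → V) :
    (canonL s t g).head? = some s := rfl

lemma canonL_getLast? (s t : V) (g : Fin k → Fin N → V) :
    (canonL s t g).getLast? = some t := by
  show ((s :: blocksL g) ++ [t]).getLast? = some t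
  exact List.getLast?_concat

lemma canonL_chain' (hk : 0 < k) (hN : 0 < N) {s t : V} {g : Fin k → Fin N → V}
    (h0 : R s (g ⟨0, hk⟩ ⟨0, hN⟩))
    (hstep : ∀ (a : Fin k) (q q' : Fin N), (q' : ℕ) = (q : ℕ) + 1 → R (g a q) (g a q'))
    (hjump : ∀ a a' : Fin k, (a' : ℕ) = (a : ℕ) + 1 →
      R (g a ⟨N - 1, by omega⟩) (g a' ⟨0, hN⟩))
    (hend : R (g ⟨k - 1, by omega⟩ ⟨N - 1, by omega⟩) t) :
    (canonL s t g).Chain' R := by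
  rw [canonL, show List.Chain' R _ ↔ _ from List.isChain_cons]
  constructor
  · intro y hy
    rw [List.head?_append_of_ne_nil _ (blocksL_ne_nil hk hN g), blocksL_head? hk hN] at hy
    simp only [Option.mem_def, Option.some.injEq] at hy
    subst hy; exact h0
  · refine List.IsChain.append (blocksL_chain' hN hstep hjump) (List.isChain_singleton t) ?_
    intro x hx y hy
    simp only [List.head?_cons, Option.mem_def, Option.some.injEq] at hy
    subst hy
    rw [blocksL_getLast? hk hN] at hx
    simp only [Option.mem_def, Option.some.injEq] at hx
    subst hx; exact hend

lemma canonL_nodup {s t : V} {g : Fin k → Fin N → V}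
    (hg : ∀ {a q a' q'}, g a q = g a' q' → a = a' ∧ q = q')
    (hs : ∀ a q, s ≠ g a q) (ht : ∀ a q, t ≠ g a q) (hst : s ≠ t) :
    (canonL s t g).Nodup := by
  rw [canonL, List.nodup_cons, List.nodup_append]
  refine ⟨?_, blocksL_nodup hg, List.nodup_singleton t, ?_⟩
  · intro hmem
    rcases List.mem_append.1 hmem with h | h
    · obtain ⟨a, q, rfl⟩ := blocksL_mem.1 h
      exact hs a q rfl
    · simp at h; exact hst h
  · intro x hx y hx'
    simp only [List.mem_singleton] at hx'
    subst hx'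
    obtain ⟨a, q, rfl⟩ := blocksL_mem.1 hx
    exact fun h => ht a q h.symm

end canon

lemma chain_length_lb {E : V → V → Prop} {φ : V → ℤ}
    (hE : ∀ u v, E u v → φ v ≤ φ u + 1) (p : List V) :
    ∀ s t : V, p.Chain' E → p.head? = some s → p.getLast? = some t →
      φ t + 1 ≤ φ s + p.length := by
  induction p with
  | nil => intro s t _ h _; simp at h
  | cons x l ih =>
    intro s t hc hh hl
    simp only [List.head?_cons, Option.some.injEq] at hh
    subst hh
    cases l with
    | nil =>
      simp only [List.getLast?_singleton, Option.some.injEq] at hl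
      subst hl; simp
    | cons y m =>
      rw [show List.Chain' _ (x :: y :: m) ↔ _ from List.isChain_cons_cons] at hc
      have hl' : (y :: m).getLast? = some t := by
        rwa [List.getLast?_cons_cons] at hl
      have h1 := ih y t hc.2 rfl hl'
      have h2 := hE _ _ hc.1
      simp only [List.length_cons] at *
      push_cast at *
      linarith

end DVertAux

namespace DVertAux

section DVert
variable {k N : ℕ} (G : SimpleGraph (Fin N)) [DecidableRel G.Adj]

lemma vNode_eq_or (i j : Fin k) (q l : Fin N) :
    vNode G i j q l = DVertV.gridV i j q l ∨ vNode G i j q l = DVertV.gridH i j q l := by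
  unfold vNode; split
  · exact Or.inl rfl
  · exact Or.inr rfl

lemma vNode_inj {i i' j j' : Fin k} {q q' l l' : Fin N}
    (h : vNode G i j q l = vNode G i' j' q' l') : i = i' ∧ j = j' ∧ q = q' ∧ l = l' := by
  unfold vNode at h
  split at h <;> split at h <;> simp_all

lemma vNode_eq_gridH {i i' j j' : Fin k} {q q' l l' : Fin N}
    (h : vNode G i j q l = DVertV.gridH i' j' q' l') :
    ¬ Split G i j q l ∧ i = i' ∧ j = j' ∧ q = q' ∧ l = l' := by
  unfold vNode at h
  split at h <;> simp_all

lemma vNode_ne_a {i i' : Fin k} {j : Fin k} {q l : Fin N} :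
    vNode G i j q l ≠ DVertV.a i' := by
  rcases vNode_eq_or G i j q l with h | h <;> rw [h] <;> simp

lemma vNode_ne_b {i i' : Fin k} {j : Fin k} {q l : Fin N} :
    vNode G i j q l ≠ DVertV.b i' := by
  rcases vNode_eq_or G i j q l with h | h <;> rw [h] <;> simp

lemma vNode_ne_c {i j' : Fin k} {j : Fin k} {q l : Fin N} :
    vNode G i j q l ≠ DVertV.c j' := by
  rcases vNode_eq_or G i j q l with h | h <;> rw [h] <;> simp

lemma vNode_ne_d {i j' : Fin k} {j : Fin k} {q l : Fin N} :
    vNode G i j q l ≠ DVertV.d j' := by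
  rcases vNode_eq_or G i j q l with h | h <;> rw [h] <;> simp

/-- vertical potential -/
def phiV (k N : ℕ) : DVertV k N → ℤ
  | .gridH _ j _ l => (j.1 : ℤ) * N + l.1
  | .gridV _ j _ l => (j.1 : ℤ) * N + l.1
  | .a _ => -1
  | .b _ => (k : ℤ) * N
  | .c j => (j.1 : ℤ) * N + N
  | .d j => (j.1 : ℤ) * N + 1

/-- horizontal potential -/
def phiH (k N : ℕ) : DVertV k N → ℤ
  | .gridH i _ q _ => (i.1 : ℤ) * N + q.1
  | .gridV i _ q _ => (i.1 : ℤ) * N + q.1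
  | .a i => (i.1 : ℤ) * N + N
  | .b i => (i.1 : ℤ) * N
  | .c _ => -1
  | .d _ => (k : ℤ) * N

lemma phiV_vNode (i j : Fin k) (q l : Fin N) :
    phiV k N (vNode G i j q l) = (j.1 : ℤ) * N + l.1 := by
  unfold vNode; split <;> rfl

lemma phiH_vNode (i j : Fin k) (q l : Fin N) :
    phiH k N (vNode G i j q l) = (i.1 : ℤ) * N + q.1 := by
  unfold vNode; split <;> rfl

lemma phiV_step : ∀ u v : DVertV k N, DVertE k N G u v → phiV k N v ≤ phiV k N u + 1 := by
  intro u v h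
  cases h with
  | up i j q l l' h =>
    rw [phiV_vNode, phiV_vNode]
    have : (l'.1 : ℤ) = l.1 + 1 := by exact_mod_cast h
    linarith
  | right i j q q' l h => simp [phiV]
  | hmatch i i' j q q' l hi hq hq' => simp [phiV]
  | vmatch i j j' q l l' hj hl hl' =>
    rw [phiV_vNode, phiV_vNode]
    have h1 : (j'.1 : ℤ) = j.1 + 1 := by exact_mod_cast hj
    have h2 : (l.1 : ℤ) + 1 = N := by exact_mod_cast hl
    have h3 : (l'.1 : ℤ) = 0 := by exact_mod_cast hl'
    rw [h1, h3]; ring_nf; linarith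
  | srcA i j q l hj hl =>
    rw [phiV_vNode]
    have h1 : (j.1 : ℤ) = 0 := by exact_mod_cast hj
    have h2 : (l.1 : ℤ) = 0 := by exact_mod_cast hl
    simp [phiV, h1, h2]
  | snkB i j q l hj hl =>
    rw [phiV_vNode]
    have h1 : (j.1 : ℤ) + 1 = k := by exact_mod_cast hj
    have h2 : (l.1 : ℤ) + 1 = N := by exact_mod_cast hl
    show (k : ℤ) * N ≤ _
    rw [← h1]; ring_nf; linarith
  | srcC i j q l hi hq =>
    have := l.isLt
    have h2 : (l.1 : ℤ) < N := by exact_mod_cast this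
    simp only [phiV]
    linarith
  | snkD i j q l hi hq =>
    have h2 : (0 : ℤ) ≤ (l.1 : ℤ) := by positivity
    simp only [phiV]
    linarith

lemma phiH_step : ∀ u v : DVertV k N, DVertE k N G u v → phiH k N v ≤ phiH k N u + 1 := by
  intro u v h
  cases h with
  | up i j q l l' h => rw [phiH_vNode, phiH_vNode]; linarith
  | right i j q q' l h =>
    have : (q'.1 : ℤ) = q.1 + 1 := by exact_mod_cast h
    simp only [phiH]
    linarith
  | hmatch i i' j q q' l hi hq hq' =>
    have h1 : (i'.1 : ℤ) = i.1 + 1 := by exact_mod_cast hi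
    have h2 : (q.1 : ℤ) + 1 = N := by exact_mod_cast hq
    have h3 : (q'.1 : ℤ) = 0 := by exact_mod_cast hq'
    simp only [phiH]
    rw [h1, h3]; ring_nf; linarith
  | vmatch i j j' q l l' hj hl hl' => rw [phiH_vNode, phiH_vNode]; linarith
  | srcA i j q l hj hl =>
    rw [phiH_vNode]
    have := q.isLt
    have h2 : (q.1 : ℤ) < N := by exact_mod_cast this
    simp only [phiH]
    linarith
  | snkB i j q l hj hl =>
    rw [phiH_vNode]
    have h2 : (0 : ℤ) ≤ (q.1 : ℤ) := by positivity
    simp only [phiH]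
    linarith
  | srcC i j q l hi hq =>
    have h1 : (i.1 : ℤ) = 0 := by exact_mod_cast hi
    have h2 : (q.1 : ℤ) = 0 := by exact_mod_cast hq
    simp [phiH, h1, h2]
  | snkD i j q l hi hq =>
    have h1 : (i.1 : ℤ) + 1 = k := by exact_mod_cast hi
    have h2 : (q.1 : ℤ) + 1 = N := by exact_mod_cast hq
    simp only [phiH]
    show _ ≤ (i.1 : ℤ) * N + q.1 + 1
    rw [← h1]; ring_nf; linarith

lemma canonVertH_eq (j : Fin k) (r : Fin N) :
    canonVertH k N j r = canonL (DVertV.c j) (DVertV.d j)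
      (fun i q => DVertV.gridH i j q r) := rfl

lemma canonVertV_eq (i : Fin k) (r : Fin N) :
    canonVertV G i r = canonL (DVertV.a i) (DVertV.b i)
      (fun j l => vNode G i j r l) := rfl

end DVert
end DVertAux

/-- if `G` contains a clique `{v_{γ_1},…,v_{γ_k}}` of size `k` (`k`
distinct, pairwise adjacent vertices), then the `2k` directed paths
`Canonical_vertex(γ_i; a_i⇝b_i)` (`i ∈ [k]`) and `Canonical_vertex(γ_j; c_j⇝d_j)`
(`j ∈ [k]`) are pairwise vertex-disjoint and each is a shortest path in `D_vertex`
between its terminal pair: all `2k` terminal pairs of `(D_vertex, T)` are simultaneously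
satisfied. -/
theorem DVert_completeness (N k : ℕ) (hN : 1 ≤ N) (hk : 1 ≤ k)
    (G : SimpleGraph (Fin N)) [DecidableRel G.Adj]
    (γ : Fin k → Fin N) (hinj : Function.Injective γ)
    (hadj : ∀ i i' : Fin k, i ≠ i' → G.Adj (γ i) (γ i')) :
    (∀ i : Fin k,
      IsShortestDirPath (DVertE k N G) (DVertV.a i) (DVertV.b i) (canonVertV G i (γ i))) ∧
    (∀ j : Fin k,
      IsShortestDirPath (DVertE k N G) (DVertV.c j) (DVertV.d j) (canonVertH k N j (γ j))) ∧
    (∀ i i' : Fin k, i ≠ i' →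
      VertDisj (canonVertV G i (γ i)) (canonVertV G i' (γ i'))) ∧
    (∀ j j' : Fin k, j ≠ j' →
      VertDisj (canonVertH k N j (γ j)) (canonVertH k N j' (γ j'))) ∧
    (∀ i j : Fin k, VertDisj (canonVertV G i (γ i)) (canonVertH k N j (γ j))) := by
  
  have hk0 : 0 < k := hk
  have hN0 : 0 < N := hN
  open DVertAux in
  have mainV : ∀ i : Fin k,
      IsShortestDirPath (DVertE k N G) (DVertV.a i) (DVertV.b i) (canonVertV G i (γ i)) := by
    intro i
    constructor
    · refine ⟨?_, ?_, ?_, ?_⟩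
      · rw [canonVertV_eq]
        refine canonL_chain' hk0 hN0 ?_ ?_ ?_ ?_
        · exact DVertE.srcA i ⟨0, hk0⟩ (γ i) ⟨0, hN0⟩ rfl rfl
        · intro a q q' h
          exact DVertE.up i a (γ i) q q' h
        · intro a a' h
          exact DVertE.vmatch i a a' (γ i) ⟨N - 1, by omega⟩ ⟨0, hN0⟩ h (by simp; omega) rfl
        · exact DVertE.snkB i ⟨k - 1, by omega⟩ (γ i) ⟨N - 1, by omega⟩ (by simp; omega)
            (by simp; omega)
      · rw [canonVertV_eq]
        refine canonL_nodup ?_ ?_ ?_ ?_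
        · intro a q a' q' h
          obtain ⟨-, h1, -, h2⟩ := vNode_inj G h
          exact ⟨h1, h2⟩
        · intro a q
          exact fun h => vNode_ne_a G h.symm
        · intro a q
          exact fun h => vNode_ne_b G h.symm
        · simp
      · rw [canonVertV_eq]; exact canonL_head? _ _ _
      · rw [canonVertV_eq]; exact canonL_getLast? _ _ _
    · intro p hp
      have hlb := chain_length_lb (phiV_step G) p _ _ hp.chain hp.head hp.last
      simp only [phiV] at hlb
      rw [canonVertV_eq, canonL_length]
      have : ((k * N + 2 : ℕ) : ℤ) ≤ (p.length : ℤ) := by push_cast; push_cast at hlb; linarith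
      exact_mod_cast this
  have mainH : ∀ j : Fin k,
      IsShortestDirPath (DVertE k N G) (DVertV.c j) (DVertV.d j) (canonVertH k N j (γ j)) := by
    intro j
    constructor
    · refine ⟨?_, ?_, ?_, ?_⟩
      · rw [canonVertH_eq]
        refine canonL_chain' hk0 hN0 ?_ ?_ ?_ ?_
        · exact DVertE.srcC ⟨0, hk0⟩ j ⟨0, hN0⟩ (γ j) rfl rfl
        · intro a q q' h
          exact DVertE.right a j q q' (γ j) h
        · intro a a' h
          exact DVertE.hmatch a a' j ⟨N - 1, by omega⟩ ⟨0, hN0⟩ (γ j) h (by simp; omega) rfl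
        · exact DVertE.snkD ⟨k - 1, by omega⟩ j ⟨N - 1, by omega⟩ (γ j) (by simp; omega)
            (by simp; omega)
      · rw [canonVertH_eq]
        refine canonL_nodup ?_ ?_ ?_ ?_
        · intro a q a' q' h
          simp only [DVertV.gridH.injEq] at h
          exact ⟨h.1, h.2.2.1⟩
        · intro a q; simp
        · intro a q; simp
        · simp
      · rw [canonVertH_eq]; exact canonL_head? _ _ _
      · rw [canonVertH_eq]; exact canonL_getLast? _ _ _
    · intro p hp
      have hlb := chain_length_lb (phiH_step G) p _ _ hp.chain hp.head hp.last
      simp only [phiH] at hlb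
      rw [canonVertH_eq, canonL_length]
      have : ((k * N + 2 : ℕ) : ℤ) ≤ (p.length : ℤ) := by push_cast; push_cast at hlb; linarith
      exact_mod_cast this
  refine ⟨mainV, mainH, ?_, ?_, ?_⟩
  · -- vertical-vertical disjointness
    intro i i' hii v hv hv'
    rw [canonVertV_eq, canonL_mem] at hv hv'
    rcases hv with rfl | rfl | ⟨a, q, rfl⟩
    · rcases hv' with h | h | ⟨a', q', h⟩
      · exact hii (by simpa using h)
      · simp at h
      · exact vNode_ne_a G h.symm
    · rcases hv' with h | h | ⟨a', q', h⟩
      · simp at h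
      · exact hii (by simpa using h)
      · exact vNode_ne_b G h.symm
    · rcases hv' with h | h | ⟨a', q', h⟩
      · exact vNode_ne_a G h
      · exact vNode_ne_b G h
      · exact hii (vNode_inj G h).1
  · -- horizontal-horizontal disjointness
    intro j j' hjj v hv hv'
    rw [canonVertH_eq, canonL_mem] at hv hv'
    rcases hv with rfl | rfl | ⟨a, q, rfl⟩
    · rcases hv' with h | h | ⟨a', q', h⟩
      · exact hjj (by simpa using h)
      · simp at h
      · simp at h
    · rcases hv' with h | h | ⟨a', q', h⟩
      · simp at h
      · exact hjj (by simpa using h)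
      · simp at h
    · rcases hv' with h | h | ⟨a', q', h⟩
      · simp at h
      · simp at h
      · simp only [DVertV.gridH.injEq] at h
        exact hjj h.2.1
  · -- vertical-horizontal disjointness
    intro i j v hv hv'
    rw [canonVertV_eq, canonL_mem] at hv
    rw [canonVertH_eq, canonL_mem] at hv'
    rcases hv with rfl | rfl | ⟨a, q, rfl⟩
    · rcases hv' with h | h | ⟨a', q', h⟩ <;> simp at h
    · rcases hv' with h | h | ⟨a', q', h⟩ <;> simp at h
    · rcases hv' with h | h | ⟨a', q', h⟩
      · exact vNode_ne_c G h
      · exact vNode_ne_d G h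
      · obtain ⟨hns, rfl, rfl, rfl, rfl⟩ := vNode_eq_gridH G h
        apply hns
        by_cases hij : i = a
        · exact Or.inl ⟨hij, by rw [hij]⟩
        · exact Or.inr ⟨hij, hadj i a hij⟩
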